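/- Let Δ be a graph with voltage assignment ℓ : D(Δ) → N and let Γ be the lift. Then for every vertex v of Δ and every n ∈ N, the map u ↦ (u, ℓ(u,v)·n) is a graph isomorphism from the local graph at v in Δ onto the local graph at (v,n) in Γ, if and only if every triangle u, v, w in Δ satisfies ℓ(u,v)·ℓ(v,w)·ℓ(w,u) = 1. -/

import Mathlib

/-- The lift of a graph `Δ` with respect to a voltage assignment `ℓ : D(Δ) → N`. -/
def liftGraph {V N : Type*} [Group N] (Δ : SimpleGraph V) (ℓ : V → V → N)
    (hℓ : ∀ u v, Δ.Adj u v → ℓ u v = (ℓ v u)⁻¹) : SimpleGraph (V × N) where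
  Adj p q := Δ.Adj p.1 q.1 ∧ ℓ p.1 q.1 = p.2 * q.2⁻¹
  symm := by
    constructor
    rintro ⟨u, m⟩ ⟨v, n⟩ ⟨h1, h2⟩
    exact ⟨h1.symm, by rw [hℓ v u h1.symm, h2]; group⟩
  loopless := by constructor; rintro ⟨u, m⟩ ⟨h, -⟩; exact Δ.loopless.irrefl u h

/-- for every vertex `v` and every `n ∈ N`, the map `u ↦ (u, ℓ(u,v)·n)` is an
isomorphism from the local graph at `v` in `Δ` onto the local graph at `(v,n)` in the lift,
iff every triangle has voltage `1`. -/
theorem local_graph_iso_iff_triangles_trivial {V N : Type*} [Group N] (Δ : SimpleGraph V)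
    (ℓ : V → V → N) (hℓ : ∀ u v, Δ.Adj u v → ℓ u v = (ℓ v u)⁻¹) :
    (∀ (v : V) (n : N),
        Set.BijOn (fun u => (u, ℓ u v * n)) (Δ.neighborSet v)
          ((liftGraph Δ ℓ hℓ).neighborSet (v, n)) ∧
        ∀ u w, u ∈ Δ.neighborSet v → w ∈ Δ.neighborSet v →
          (Δ.Adj u w ↔ (liftGraph Δ ℓ hℓ).Adj (u, ℓ u v * n) (w, ℓ w v * n)))
    ↔ (∀ u v w, Δ.Adj u v → Δ.Adj v w → Δ.Adj w u → ℓ u v * ℓ v w * ℓ w u = 1) := by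
  constructor
  · intro h u v w huv hvw hwu
    obtain ⟨-, h2⟩ := h v 1
    obtain ⟨-, he⟩ := (h2 u w huv.symm hvw).mp hwu.symm
    rw [hℓ v w hvw, hℓ w u hwu]
    have : ℓ u w = ℓ u v * (ℓ w v)⁻¹ := by rw [he]; group
    rw [this, hℓ w v hvw.symm]; group
  · intro h v n
    refine ⟨⟨?_, ?_, ?_⟩, ?_⟩
    · intro u hu
      exact ⟨hu, by rw [hℓ v u hu]; group⟩
    · intro a _ b _ hab
      exact congrArg Prod.fst hab
    · rintro ⟨u, m⟩ ⟨h1, h2⟩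
      refine ⟨u, h1, ?_⟩
      simp only [Prod.mk.injEq]
      exact ⟨trivial, by rw [hℓ u v h1.symm, h2]; group⟩
    · intro u w hu hw
      constructor
      · intro huw
        refine ⟨huw, ?_⟩
        have ht := h u v w ((Δ.mem_neighborSet v u).mp hu).symm hw huw.symm
        have : ℓ u w = ℓ u v * (ℓ w v)⁻¹ := by
          rw [hℓ v w hw, hℓ w u huw.symm] at ht
          have h4 := mul_eq_one_iff_eq_inv.mp ht
          rw [inv_inv] at h4
          exact h4.symm
        rw [this]; group
      · exact fun hh => hh.1
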